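/- Let α be a positive integer and let n be an integer with 1 ≤ n ≤ α. Then H_α - H_{α-n} = (Σ_{k=0}^{n-1} (k+1)·s(n,k+1)·α^k) / (Σ_{k=0}^{n} s(n,k)·α^k), where s(·,·) are the signed Stirling numbers of the first kind. -/
import Mathlib


/-- Signed Stirling numbers of the first kind `s(n, k)`. -/
def stirling1 : ℕ → ℕ → ℤ
  | 0, 0 => 1
  | 0, _ + 1 => 0
  | n + 1, 0 => -(n : ℤ) * stirling1 n 0
  | n + 1, k + 1 => stirling1 n k - (n : ℤ) * stirling1 n (k + 1)

/-- Harmonic number `H_n = 1 + 1/2 + ⋯ + 1/n`, `H_0 = 0`. -/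
noncomputable def H (n : ℕ) : ℝ := ∑ k ∈ Finset.range n, (1 : ℝ) / (k + 1)

noncomputable def Sfun (n : ℕ) (x : ℝ) : ℝ :=
  ∑ k ∈ Finset.range (n + 1), (stirling1 n k : ℝ) * x ^ k

noncomputable def Nfun (n : ℕ) (x : ℝ) : ℝ :=
  ∑ k ∈ Finset.range n, ((k : ℝ) + 1) * (stirling1 n (k + 1) : ℝ) * x ^ k

lemma stirling1_eq_zero : ∀ n k : ℕ, n < k → stirling1 n k = 0 := by
  intro n
  induction n with
  | zero =>
    intro k hk
    cases k with
    | zero => omega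
    | succ m => simp [stirling1]
  | succ n ih =>
    intro k hk
    cases k with
    | zero => omega
    | succ m =>
      have h1 : stirling1 n m = 0 := ih m (by omega)
      have h2 : stirling1 n (m + 1) = 0 := ih (m + 1) (by omega)
      simp [stirling1, h1, h2]

lemma Srec (n : ℕ) (x : ℝ) : Sfun (n + 1) x = (x - n) * Sfun n x := by
  have e1 : x * Sfun n x
      = ∑ k ∈ Finset.range (n + 1), (stirling1 n k : ℝ) * x ^ (k + 1) := by
    unfold Sfun
    rw [Finset.mul_sum]
    exact Finset.sum_congr rfl fun k _ => by ring
  have e2 : (n : ℝ) * Sfun n x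
      = (∑ k ∈ Finset.range (n + 1), (n : ℝ) * (stirling1 n (k + 1) : ℝ) * x ^ (k + 1))
        + (n : ℝ) * (stirling1 n 0 : ℝ) := by
    unfold Sfun
    rw [Finset.sum_range_succ' (fun k => (stirling1 n k : ℝ) * x ^ k) n,
      Finset.sum_range_succ (fun k => (n : ℝ) * (stirling1 n (k + 1) : ℝ) * x ^ (k + 1)) n,
      stirling1_eq_zero n (n + 1) (by omega)]
    simp [Finset.mul_sum, mul_add]
    · apply Finset.sum_congr rfl; intro k _; push_cast; ring
  rw [sub_mul, e1, e2]
  unfold Sfun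
  rw [Finset.sum_range_succ' (fun k => (stirling1 (n + 1) k : ℝ) * x ^ k) (n + 1)]
  have : ∀ k ∈ Finset.range (n + 1),
      (stirling1 (n + 1) (k + 1) : ℝ) * x ^ (k + 1)
        = (stirling1 n k : ℝ) * x ^ (k + 1)
          - (n : ℝ) * (stirling1 n (k + 1) : ℝ) * x ^ (k + 1) := by
    intro k _
    show ((stirling1 n k - (n : ℤ) * stirling1 n (k + 1) : ℤ) : ℝ) * x ^ (k + 1) = _
    push_cast
    ring
  rw [Finset.sum_congr rfl this, Finset.sum_sub_distrib]
  show _ + ((-(n : ℤ) * stirling1 n 0 : ℤ) : ℝ) * x ^ 0 = _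
  push_cast
  ring

lemma Nrec (n : ℕ) (x : ℝ) : Nfun (n + 1) x = Sfun n x + (x - n) * Nfun n x := by
  have e1 : x * Nfun n x
      = ∑ k ∈ Finset.range (n + 1), (k : ℝ) * (stirling1 n k : ℝ) * x ^ k := by
    unfold Nfun
    rw [Finset.mul_sum,
      Finset.sum_range_succ' (fun k => (k : ℝ) * (stirling1 n k : ℝ) * x ^ k) n]
    simp only [Nat.cast_zero, zero_mul, mul_zero, add_zero, pow_zero]
    apply Finset.sum_congr rfl; intro k _; push_cast; ring
  have e2 : (n : ℝ) * Nfun n x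
      = ∑ k ∈ Finset.range (n + 1), (n : ℝ) * (((k : ℝ) + 1) * (stirling1 n (k + 1) : ℝ) * x ^ k) := by
    unfold Nfun
    rw [Finset.mul_sum,
      Finset.sum_range_succ
        (fun k => (n : ℝ) * (((k : ℝ) + 1) * (stirling1 n (k + 1) : ℝ) * x ^ k)) n,
      stirling1_eq_zero n (n + 1) (by omega)]
    simp
  have e3 : Sfun n x + x * Nfun n x
      = ∑ k ∈ Finset.range (n + 1), ((k : ℝ) + 1) * (stirling1 n k : ℝ) * x ^ k := by
    rw [e1]
    unfold Sfun
    rw [← Finset.sum_add_distrib]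
    apply Finset.sum_congr rfl; intro k _; ring
  rw [sub_mul, add_sub_assoc', e3, e2]
  unfold Nfun
  rw [← Finset.sum_sub_distrib]
  apply Finset.sum_congr rfl
  intro k _
  show ((k : ℝ) + 1) * ((stirling1 n k - (n : ℤ) * stirling1 n (k + 1) : ℤ) : ℝ) * x ^ k = _
  push_cast
  ring

lemma Sprod (n : ℕ) (x : ℝ) : Sfun n x = ∏ j ∈ Finset.range n, (x - j) := by
  induction n with
  | zero => simp [Sfun, stirling1]
  | succ n ih => rw [Srec, ih, Finset.prod_range_succ]; ring

lemma Spos (a n : ℕ) (h : n ≤ a) : 0 < Sfun n (a : ℝ) := by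
  rw [Sprod]
  apply Finset.prod_pos
  intro j hj
  rw [Finset.mem_range] at hj
  have : (j : ℝ) < (a : ℝ) := by exact_mod_cast lt_of_lt_of_le hj h
  linarith

lemma key (a : ℕ) : ∀ n : ℕ, n ≤ a →
    (H a - H (a - n)) * Sfun n (a : ℝ) = Nfun n (a : ℝ) := by
  intro n
  induction n with
  | zero => simp [Nfun]
  | succ n ih =>
    intro hn
    have hn' : n ≤ a := by omega
    have hm : a - n = (a - (n + 1)) + 1 := by omega
    have hcast : ((a - (n + 1) : ℕ) : ℝ) + 1 = (a : ℝ) - n := by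
      have : ((a - (n + 1) : ℕ) : ℝ) = (a : ℝ) - (n + 1) := by
        rw [Nat.cast_sub hn]; push_cast; ring
      rw [this]; ring
    have hpos : (0 : ℝ) < (a : ℝ) - n := by
      have : (n : ℝ) + 1 ≤ (a : ℝ) := by exact_mod_cast hn
      linarith
    have hH : H (a - n) = H (a - (n + 1)) + 1 / ((a : ℝ) - n) := by
      rw [hm]
      unfold H
      rw [Finset.sum_range_succ, hcast]
    rw [Srec, Nrec, ← ih hn']
    rw [hH]
    field_simp
    ring

theorem harmonic_diff_eq_ratio (a n : ℕ) (ha : 0 < a) (h1 : 1 ≤ n) (h2 : n ≤ a) :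
    H a - H (a - n) =
      (∑ k ∈ Finset.range n, ((k : ℝ) + 1) * (stirling1 n (k + 1) : ℝ) * (a : ℝ) ^ k) /
        (∑ k ∈ Finset.range (n + 1), (stirling1 n k : ℝ) * (a : ℝ) ^ k) := by
  have hS := Spos a n h2
  have hk := key a n h2
  show H a - H (a - n) = Nfun n (a : ℝ) / Sfun n (a : ℝ)
  rw [eq_div_iff (ne_of_gt hS)]
  exact hk
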